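/- Let C be a counter machine and ℂ the Σ_C-Nmatrix induced by C. For every formula A ∈ L_{Σ_C}(P): the computation comp(C, 0⃗) of C starting with all counters set to zero is finite and A = seq(comp(C, 0⃗)) if and only if A is a theorem of ⟨Σ_C, ⊢_ℂ⟩ (i.e. ∅ ⊢_ℂ A). -/

import Mathlib

structure Signature where
  Conn : Type
  arity : Conn → ℕ

inductive Fm (S : Signature) : Type where
  | var : ℕ → Fm S
  | app : (c : S.Conn) → (Fin (S.arity c) → Fm S) → Fm S

def Fm.subst {S : Signature} (σ : ℕ → Fm S) : Fm S → Fm S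
  | .var i => σ i
  | .app c args => .app c (fun j => (args j).subst σ)

def Fm.varsLT {S : Signature} (n : ℕ) : Fm S → Prop
  | .var i => i < n
  | .app _ args => ∀ j, (args j).varsLT n

structure NMatrix (S : Signature) (V : Type) where
  D : Set V
  interp : (c : S.Conn) → (Fin (S.arity c) → V) → Set V
  interp_nonempty : ∀ c args, (interp c args).Nonempty

def IsVal {S : Signature} {V : Type} (M : NMatrix S V) (v : Fm S → V) : Prop :=
  ∀ (c : S.Conn) (args : Fin (S.arity c) → Fm S),
    v (Fm.app c args) ∈ M.interp c (fun i => v (args i))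

def Entails {S : Signature} {V : Type} (M : NMatrix S V) (Γ : Set (Fm S)) (A : Fm S) : Prop :=
  ∀ v, IsVal M v → (∀ B ∈ Γ, v B ∈ M.D) → v A ∈ M.D

def Interderiv {S : Signature} {V : Type} (M : NMatrix S V) (A B : Fm S) : Prop :=
  Entails M {A} B ∧ Entails M {B} A

def Deterministic {S : Signature} {V : Type} (M : NMatrix S V) : Prop :=
  ∀ c args, ∃ x, M.interp c args = {x}

inductive CMNum : Type where
  | r0 | ge0 | ge1 | ge2
deriving DecidableEq

inductive CMInstr (n : ℕ) (Q : Type) : Type where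
  | inc : Fin n → Q → CMInstr n Q
  | dec : Fin n → Q → Q → CMInstr n Q

structure CounterMachine where
  n : ℕ
  Q : Type
  finQ : Finite Q
  qinit : Q
  δ : Q → Option (CMInstr n Q)

inductive CMVal (C : CounterMachine) : Type where
  | num : CMNum → CMVal C
  | conf : C.Q → (Fin C.n → CMNum) → CMVal C
  | init : CMVal C
  | error : CMVal C

inductive CMConn (C : CounterMachine) : Type where
  | zero : CMConn C
  | eps : CMConn C
  | succ : CMConn C
  | step : C.Q → CMConn C

def CMSig (C : CounterMachine) : Signature where
  Conn := CMConn C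
  arity := fun c => match c with
    | .zero => 0
    | .eps => 0
    | .succ => 1
    | .step _ => C.n + 1

/-- Interpretation of `succ` on abstract numbers. -/
def zeroNum : Set CMNum := {.r0, .ge0}

def succNum : CMNum → Set CMNum
  | .r0 => {.ge1}
  | .ge0 => {.ge0, .ge1}
  | .ge1 => {.ge2}
  | .ge2 => {.ge2}

/-- Interpretation of `succ` in the Nmatrix induced by `C`. -/
def succC (C : CounterMachine) : CMVal C → Set (CMVal C)
  | .num x => CMVal.num '' succNum x
  | _ => {.error}

/-- Interpretation of `zero` in the Nmatrix induced by `C`. -/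
def zeroC (C : CounterMachine) : Set (CMVal C) := {.num .r0, .num .ge0}

/-- The condition under which `step^q` applied to `x` and a tuple of numbers `zn`
produces the configuration value `conf q zn`. -/
def stepOK (C : CounterMachine) (q : C.Q) (x : CMVal C) (zn : Fin C.n → CMNum) : Prop :=
  (x = CMVal.init ∧ q = C.qinit ∧ ((∀ i, zn i = .r0) ∨ (∀ i, zn i = .ge0))) ∨
  (∃ (q' : C.Q) (yn : Fin C.n → CMNum), x = CMVal.conf q' yn ∧
    ((∃ i, C.δ q' = some (.inc i q) ∧ zn i ∈ succNum (yn i) ∧ ∀ l, l ≠ i → zn l = yn l) ∨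
     (∃ i s, C.δ q' = some (.dec i q s) ∧ yn i ∈ succNum (zn i) ∧ ∀ l, l ≠ i → zn l = yn l) ∨
     (∃ i s, C.δ q' = some (.dec i s q) ∧ yn i ∈ zeroNum ∧ zn = yn)))

/-- Interpretation of `step^q` in the Nmatrix induced by `C`. -/
def stepC (C : CounterMachine) (q : C.Q) (x : CMVal C) (z : Fin C.n → CMVal C) :
    Set (CMVal C) :=
  { w | (∃ zn : Fin C.n → CMNum, (∀ i, z i = .num (zn i)) ∧ stepOK C q x zn ∧
          w = .conf q zn) ∨
        (¬ (∃ zn : Fin C.n → CMNum, (∀ i, z i = .num (zn i)) ∧ stepOK C q x zn) ∧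
          w = .error) }

lemma succC_nonempty (C : CounterMachine) (x : CMVal C) : (succC C x).Nonempty := by
  cases x with
  | num y =>
      cases y
      · exact ⟨.num .ge1, by simp [succC, succNum]⟩
      · exact ⟨.num .ge0, by simp [succC, succNum]⟩
      · exact ⟨.num .ge2, by simp [succC, succNum]⟩
      · exact ⟨.num .ge2, by simp [succC, succNum]⟩
  | conf q r => exact ⟨.error, rfl⟩
  | init => exact ⟨.error, rfl⟩
  | error => exact ⟨.error, rfl⟩

lemma stepC_nonempty (C : CounterMachine) (q : C.Q) (x : CMVal C)
    (z : Fin C.n → CMVal C) : (stepC C q x z).Nonempty := by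
  by_cases h : ∃ zn : Fin C.n → CMNum, (∀ i, z i = .num (zn i)) ∧ stepOK C q x zn
  · obtain ⟨zn, hz, hok⟩ := h
    exact ⟨.conf q zn, Or.inl ⟨zn, hz, hok, rfl⟩⟩
  · exact ⟨.error, Or.inr ⟨h, rfl⟩⟩

/-- The Nmatrix ℂ induced by the counter machine `C`. -/
def CMmatrix (C : CounterMachine) : NMatrix (CMSig C) (CMVal C) where
  D := { w | ∃ (q : C.Q) (r : Fin C.n → CMNum), w = CMVal.conf q r ∧ C.δ q = none }
  interp := fun c => match c with
    | .zero => fun _ => zeroC C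
    | .eps => fun _ => {CMVal.init}
    | .succ => fun args => succC C (args ⟨0, Nat.one_pos⟩)
    | .step q => fun args => stepC C q (args ⟨0, Nat.succ_pos _⟩) (fun i => args i.succ)
  interp_nonempty := by
    intro c args
    cases c with
    | zero => exact ⟨.num .r0, Or.inl rfl⟩
    | eps => exact ⟨.init, rfl⟩
    | succ => exact succC_nonempty C _
    | step q => exact stepC_nonempty C q _ _

/-- Encoding of natural numbers as closed formulas. -/
def enc (C : CounterMachine) : ℕ → Fm (CMSig C)
  | 0 => .app .zero (fun i => i.elim0)
  | a + 1 => .app .succ (fun _ => enc C a)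

/-- Configurations of a counter machine. -/
def Config (C : CounterMachine) : Type := C.Q × (Fin C.n → ℕ)

/-- One step of computation: `none` when the configuration is halting. -/
def nextConf (C : CounterMachine) (cfg : Config C) : Option (Config C) :=
  match C.δ cfg.1 with
  | none => none
  | some (.inc i q') => some (q', Function.update cfg.2 i (cfg.2 i + 1))
  | some (.dec i q' q'') =>
      if cfg.2 i = 0 then some (q'', cfg.2)
      else some (q', Function.update cfg.2 i (cfg.2 i - 1))

/-- The configuration reached after `k` steps starting from ⟨q_init, 0⃗⟩, or `none` if the
machine has already halted strictly before step `k`. -/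
def steps (C : CounterMachine) : ℕ → Option (Config C)
  | 0 => some (C.qinit, fun _ => 0)
  | k + 1 => (steps C k).bind (nextConf C)

/-- A configuration is halting when the transition function is undefined on its state. -/
def Halting (C : CounterMachine) (cfg : Config C) : Prop := C.δ cfg.1 = none

/-- Encoding of a reversed list of configurations as a formula (head = last configuration). -/
def seqRev (C : CounterMachine) : List (Config C) → Fm (CMSig C)
  | [] => .app .eps (fun i => i.elim0)
  | cfg :: rest =>
      .app (.step cfg.1) (Fin.cons (seqRev C rest) (fun i => enc C (cfg.2 i)))

/-- Encoding of a finite sequence of configurations as a formula. -/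
def seqFm (C : CounterMachine) (l : List (Config C)) : Fm (CMSig C) := seqRev C l.reverse

/-- The list of configurations ⟨C₀, …, C_k⟩ of the computation of `C` from all counters zero. -/
def compList (C : CounterMachine) (k : ℕ) : List (Config C) :=
  (List.range (k + 1)).filterMap (steps C)
namespace CMProof

variable {C : CounterMachine}

/-- Depth of a numeral formula. -/
def numDepth : Fm (CMSig C) → Option ℕ
  | .app .zero _ => some 0
  | .app .succ args => (numDepth (args ⟨0, Nat.one_pos⟩)).map (· + 1)
  | _ => none

lemma numDepth_enc (a : ℕ) : numDepth (enc C a) = some a := by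
  induction a with
  | zero => rfl
  | succ a ih => simp [enc, numDepth, ih]

lemma enc_of_numDepth : ∀ (t : Fm (CMSig C)) (a : ℕ), numDepth t = some a → t = enc C a := by
  intro t
  induction t with
  | var i => intro a h; simp [numDepth] at h
  | app c args ih =>
    intro a h
    cases c with
    | zero =>
      simp [numDepth] at h
      subst h
      show _ = Fm.app _ _
      congr 1
      funext i; exact i.elim0
    | eps => simp [numDepth] at h
    | succ =>
      simp only [numDepth, Option.map_eq_some_iff] at h
      obtain ⟨a', h1, h2⟩ := h
      subst h2
      have := ih ⟨0, Nat.one_pos⟩ a' h1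
      show _ = Fm.app _ _
      congr 1
      funext i
      have hi : (i : ℕ) < 1 := i.isLt
      have : i = ⟨0, Nat.one_pos⟩ := by
        apply Fin.ext; show (i : ℕ) = 0; omega
      rw [this]
      exact ih _ a' h1
    | step q => simp [numDepth] at h

end CMProof
namespace CMProof

/-- A "number assignment" consistent with the Nmatrix interpretations. -/
def Valid (f : ℕ → CMNum) : Prop :=
  f 0 ∈ zeroNum ∧ ∀ a, f (a + 1) ∈ succNum (f a)

def fE : ℕ → CMNum := fun a => if a = 0 then .r0 else if a = 1 then .ge1 else .ge2

def fG (m : ℕ) : ℕ → CMNum := fun a => if a ≤ m then .ge0 else if a = m + 1 then .ge1 else .ge2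

lemma valid_fE : Valid fE := by
  constructor
  · simp [fE, zeroNum]
  · intro a
    rcases a with _ | _ | a <;> simp [fE, succNum]

lemma fG_eq_ge0 {m a : ℕ} (h : a ≤ m) : fG m a = .ge0 := by simp [fG, h]

lemma fG_eq_ge1 {m a : ℕ} (h : a = m + 1) : fG m a = .ge1 := by
  have h2 : ¬ a ≤ m := by omega
  simp [fG, h, h2]

lemma fG_eq_ge2 {m a : ℕ} (h : m + 2 ≤ a) : fG m a = .ge2 := by
  have h2 : ¬ a ≤ m := by omega
  have h3 : ¬ a = m + 1 := by omega
  simp [fG, h2, h3]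

lemma fG_cases (m a : ℕ) : (a ≤ m ∧ fG m a = .ge0) ∨ (a = m + 1 ∧ fG m a = .ge1) ∨
    (m + 2 ≤ a ∧ fG m a = .ge2) := by
  rcases Nat.lt_trichotomy a (m + 1) with h | h | h
  · exact Or.inl ⟨by omega, fG_eq_ge0 (by omega)⟩
  · exact Or.inr (Or.inl ⟨h, fG_eq_ge1 h⟩)
  · exact Or.inr (Or.inr ⟨by omega, fG_eq_ge2 (by omega)⟩)

lemma valid_fG (m : ℕ) : Valid (fG m) := by
  constructor
  · exact Or.inr (fG_eq_ge0 (Nat.zero_le m))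
  · intro a
    rcases fG_cases m a with ⟨h1, h2⟩ | ⟨h1, h2⟩ | ⟨h1, h2⟩ <;> rw [h2]
    · rcases Nat.lt_or_ge (a + 1) (m + 1) with h3 | h3
      · rw [fG_eq_ge0 (by omega)]; simp [succNum]
      · rw [fG_eq_ge1 (by omega)]; simp [succNum]
    · rw [fG_eq_ge2 (by omega)]; simp [succNum]
    · rw [fG_eq_ge2 (by omega)]; simp [succNum]

lemma mem_succNum_ge0 {x : CMNum} (h : x ∈ succNum .ge0) : x = .ge0 ∨ x = .ge1 := h

lemma fE_r0 {a : ℕ} (h : fE a = .r0) : a = 0 := by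
  simp only [fE] at h; split_ifs at h <;> omega

lemma fE_ne_ge0 (a : ℕ) : fE a ≠ .ge0 := by
  simp only [fE]; split_ifs <;> simp

lemma fE_zeroNum {a : ℕ} (h : fE a ∈ zeroNum) : a = 0 := by
  rcases h with h | h
  · exact fE_r0 h
  · rw [Set.mem_singleton_iff] at h
    exact absurd h (fE_ne_ge0 a)

lemma fG_zeroNum {m a : ℕ} (h : fG m a ∈ zeroNum) : a ≤ m := by
  rcases fG_cases m a with ⟨h1, h2⟩ | ⟨h1, h2⟩ | ⟨h1, h2⟩ <;> rw [h2] at h <;>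
    simp [zeroNum] at h
  · exact h1

lemma r0_not_succNum (x : CMNum) : CMNum.r0 ∉ succNum x := by
  cases x <;> simp [succNum]

lemma fG_succNum_le {m a b : ℕ} (h : fG m a ∈ succNum (fG m b)) (hb : b ≤ m) : a ≤ m + 1 := by
  rw [fG_eq_ge0 hb] at h
  rcases mem_succNum_ge0 h with h2 | h2 <;>
    rcases fG_cases m a with ⟨h1, h3⟩ | ⟨h1, h3⟩ | ⟨h1, h3⟩ <;> rw [h3] at h2 <;>
      first | omega | simp at h2

lemma fG_succNum_ge {m a b : ℕ} (h : fG m a ∈ succNum (fG m b)) (hb : b = m + 1) :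
    m + 2 ≤ a := by
  rw [fG_eq_ge1 hb] at h
  have h2 : fG m a = .ge2 := h
  rcases fG_cases m a with ⟨h1, h3⟩ | ⟨h1, h3⟩ | ⟨h1, h3⟩ <;> rw [h3] at h2 <;>
    first | omega | simp at h2

lemma claim_inc {a b : ℕ} (h : ∀ f, Valid f → f a ∈ succNum (f b)) : a = b + 1 := by
  have hle : a ≤ b + 1 := fG_succNum_le (h (fG b) (valid_fG b)) le_rfl
  rcases Nat.eq_zero_or_pos b with hb0 | hb0
  · subst hb0
    have h2 := h fE valid_fE
    have he : fE 0 = .r0 := by simp [fE]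
    rw [he] at h2
    have h3 : fE a = .ge1 := h2
    simp only [fE] at h3
    split_ifs at h3 <;> omega
  · have h2 := fG_succNum_ge (h (fG (b - 1)) (valid_fG (b - 1))) (by omega)
    omega

lemma claim_dec1 {a b : ℕ} (hb : 1 ≤ b)
    (h : ∀ f, Valid f → f b ∈ succNum (f a) ∨ (f b ∈ zeroNum ∧ f a = f b)) : b = a + 1 := by
  have hle : b ≤ a + 1 := by
    rcases h (fG a) (valid_fG a) with h1 | ⟨h1, _⟩
    · exact fG_succNum_le h1 le_rfl
    · have := fG_zeroNum h1; omega
  rcases Nat.eq_zero_or_pos a with ha0 | ha0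
  · subst ha0
    rcases h fE valid_fE with h1 | ⟨h1, _⟩
    · have he : fE 0 = .r0 := by simp [fE]
      rw [he] at h1
      have h3 : fE b = .ge1 := h1
      simp only [fE] at h3
      split_ifs at h3 <;> omega
    · have := fE_zeroNum h1; omega
  · have hge : a + 1 ≤ b := by
      rcases h (fG (a - 1)) (valid_fG (a - 1)) with h1 | ⟨h1, h2⟩
      · have := fG_succNum_ge h1 (by omega); omega
      · exfalso
        have h3 : b ≤ a - 1 := fG_zeroNum h1
        rw [fG_eq_ge1 (show a = (a-1) + 1 by omega), fG_eq_ge0 h3] at h2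
        simp at h2
    omega

lemma claim_eq {a b : ℕ} (h : ∀ f, Valid f → f a = f b) : a = b := by
  by_contra hne
  rcases Nat.lt_or_ge a b with hlt | hge
  · have h1 := h (fG a) (valid_fG a)
    rw [fG_eq_ge0 le_rfl] at h1
    rcases fG_cases a b with ⟨h2, h3⟩ | ⟨h2, h3⟩ | ⟨h2, h3⟩ <;> rw [h3] at h1 <;>
      first | omega | simp at h1
  · have hlt : b < a := by omega
    have h1 := h (fG b) (valid_fG b)
    rw [fG_eq_ge0 le_rfl] at h1
    rcases fG_cases b a with ⟨h2, h3⟩ | ⟨h2, h3⟩ | ⟨h2, h3⟩ <;> rw [h3] at h1 <;>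
      first | omega | simp at h1

end CMProof
namespace CMProof

open Classical in
/-- The deterministic value chosen for `step q` given argument values. -/
noncomputable def stepVal (C : CounterMachine) (q : C.Q) (x : CMVal C)
    (z : Fin C.n → CMVal C) : CMVal C :=
  if h : ∃ zn : Fin C.n → CMNum, (∀ i, z i = .num (zn i)) ∧ stepOK C q x zn then
    .conf q h.choose
  else .error

/-- The canonical valuation associated with a number assignment `f`. -/
noncomputable def vF (f : ℕ → CMNum) : Fm (CMSig C) → CMVal C
  | .var _ => .error
  | .app .zero _ => .num (f 0)
  | .app .eps _ => .init
  | .app .succ args =>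
      match numDepth (args ⟨0, Nat.one_pos⟩) with
      | some a => .num (f (a + 1))
      | none => .error
  | .app (.step q) args =>
      stepVal C q (vF f (args ⟨0, Nat.succ_pos _⟩)) (fun i => vF f (args i.succ))

lemma vF_var (f : ℕ → CMNum) (i : ℕ) : vF (C := C) f (.var i) = .error := rfl
lemma vF_zero (f : ℕ → CMNum) (args) : vF (C := C) f (.app .zero args) = .num (f 0) := rfl
lemma vF_eps (f : ℕ → CMNum) (args) : vF (C := C) f (.app .eps args) = .init := rfl
lemma vF_succ (f : ℕ → CMNum) (args) : vF (C := C) f (.app .succ args) =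
    match numDepth (args ⟨0, Nat.one_pos⟩) with
    | some a => .num (f (a + 1))
    | none => .error := rfl
lemma vF_step (f : ℕ → CMNum) (q : C.Q) (args) : vF (C := C) f (.app (.step q) args) =
    stepVal C q (vF f (args ⟨0, Nat.succ_pos _⟩)) (fun i => vF f (args i.succ)) := rfl

lemma vF_num_of_numDepth {f : ℕ → CMNum} {t : Fm (CMSig C)} {a : ℕ}
    (h : numDepth t = some a) : vF f t = .num (f a) := by
  cases t with
  | var i => simp [numDepth] at h
  | app c args =>
    cases c with
    | zero =>
      simp [numDepth] at h
      subst h; rfl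
    | eps => simp [numDepth] at h
    | succ =>
      simp only [numDepth, Option.map_eq_some_iff] at h
      obtain ⟨a', h1, h2⟩ := h
      subst h2
      rw [vF_succ, h1]
    | step q => simp [numDepth] at h

lemma vF_not_num_of_numDepth {f : ℕ → CMNum} {t : Fm (CMSig C)}
    (h : numDepth t = none) (x : CMNum) : vF f t ≠ .num x := by
  cases t with
  | var i => rw [vF_var]; simp
  | app c args =>
    cases c with
    | zero => simp [numDepth] at h
    | eps => rw [vF_eps]; simp
    | succ =>
      simp only [numDepth, Option.map_eq_none_iff] at h
      rw [vF_succ, h]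
      simp
    | step q =>
      rw [vF_step, stepVal]
      split <;> simp

lemma vF_num_iff {f : ℕ → CMNum} {t : Fm (CMSig C)} {x : CMNum} :
    vF f t = .num x ↔ ∃ a, numDepth t = some a ∧ x = f a := by
  constructor
  · intro h
    cases hd : numDepth t with
    | none => exact absurd h (vF_not_num_of_numDepth hd x)
    | some a =>
      refine ⟨a, rfl, ?_⟩
      have := vF_num_of_numDepth (f := f) hd
      rw [h] at this
      exact CMVal.num.inj this
  · rintro ⟨a, h1, h2⟩
    subst h2
    exact vF_num_of_numDepth h1

lemma vF_enc (f : ℕ → CMNum) (a : ℕ) : vF f (enc C a) = .num (f a) :=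
  vF_num_of_numDepth (numDepth_enc a)

lemma vF_isVal {f : ℕ → CMNum} (hf : Valid f) : IsVal (CMmatrix C) (vF f) := by
  intro c args
  cases c with
  | zero =>
    show vF f (.app .zero args) ∈ zeroC C
    rw [vF_zero]
    rcases hf.1 with h | h
    · exact Or.inl (by rw [h])
    · rw [Set.mem_singleton_iff] at h
      refine Or.inr ?_
      rw [Set.mem_singleton_iff, h]
  | eps => rfl
  | succ =>
    show vF f (.app .succ args) ∈ succC C (vF f (args ⟨0, Nat.one_pos⟩))
    rw [vF_succ]
    cases hd : numDepth (args ⟨0, Nat.one_pos⟩) with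
    | some a =>
      rw [vF_num_of_numDepth hd]
      exact ⟨f (a + 1), hf.2 a, rfl⟩
    | none =>
      rcases hv : vF f (args ⟨0, Nat.one_pos⟩) with x | ⟨q, r⟩ | _ | _
      · exact absurd hv (vF_not_num_of_numDepth hd x)
      · exact rfl
      · exact rfl
      · exact rfl
  | step q =>
    show vF f (.app (.step q) args) ∈
      stepC C q (vF f (args ⟨0, Nat.succ_pos _⟩)) (fun i => vF f (args i.succ))
    rw [vF_step, stepVal]
    split
    · next h => exact Or.inl ⟨h.choose, h.choose_spec.1, h.choose_spec.2, rfl⟩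
    · next h => exact Or.inr ⟨h, rfl⟩

lemma vF_init_iff {f : ℕ → CMNum} {t : Fm (CMSig C)} :
    vF f t = .init ↔ t = .app .eps (fun i => i.elim0) := by
  constructor
  · intro h
    cases t with
    | var i => simp [vF_var] at h
    | app c args =>
      cases c with
      | zero => simp [vF_zero] at h
      | eps =>
        congr 1
        funext i
        exact i.elim0
      | succ =>
        rw [vF_succ] at h
        split at h <;> simp at h
      | step q =>
        rw [vF_step, stepVal] at h
        split at h <;> simp at h
  · intro h; subst h; rfl

end CMProof
namespace CMProof

lemma compList_zero : compList C 0 = [(C.qinit, fun _ => 0)] := by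
  simp [compList, List.range_succ, List.filterMap, steps]
  rfl

lemma compList_succ {k : ℕ} {cfg : Config C} (h : steps C (k + 1) = some cfg) :
    compList C (k + 1) = compList C k ++ [cfg] := by
  show (List.range (k + 1 + 1)).filterMap (steps C) = _
  rw [List.range_succ, List.filterMap_append]
  congr 1
  simp [List.filterMap, h]

lemma seqFm_append (l : List (Config C)) (cfg : Config C) :
    seqFm C (l ++ [cfg]) =
      .app (.step cfg.1) (Fin.cons (seqFm C l) (fun i => enc C (cfg.2 i))) := by
  simp [seqFm, seqRev]

lemma steps_succ_elim {k : ℕ} {cfg' : Config C} (h : steps C (k + 1) = some cfg') :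
    ∃ cfg, steps C k = some cfg ∧ nextConf C cfg = some cfg' := by
  rw [show steps C (k + 1) = (steps C k).bind (nextConf C) from rfl] at h
  cases hs : steps C k with
  | none => rw [hs] at h; simp at h
  | some cfg => rw [hs] at h; exact ⟨cfg, rfl, h⟩

lemma eps_value {v : Fm (CMSig C) → CMVal C} (hv : IsVal (CMmatrix C) v)
    (args : Fin ((CMSig C).arity .eps) → Fm (CMSig C)) :
    v (.app .eps args) = .init := by
  have h : v (.app .eps args) ∈ ({CMVal.init} : Set (CMVal C)) := hv .eps args
  exact h

lemma step_value {v : Fm (CMSig C) → CMVal C} (hv : IsVal (CMmatrix C) v)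
    (q : C.Q) (x : Fm (CMSig C)) (zs : Fin C.n → Fm (CMSig C))
    (zn : Fin C.n → CMNum) (hz : ∀ i, v (zs i) = .num (zn i))
    (hok : stepOK C q (v x) zn) :
    v (.app (.step q) (Fin.cons x zs)) = .conf q zn := by
  have h : v (.app (.step q) (Fin.cons x zs)) ∈
      stepC C q (v ((Fin.cons x zs : Fin (C.n + 1) → Fm (CMSig C)) ⟨0, Nat.succ_pos _⟩))
        (fun i => v ((Fin.cons x zs : Fin (C.n + 1) → Fm (CMSig C)) i.succ)) :=
    hv (.step q) (Fin.cons x zs)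
  rw [show ((Fin.cons x zs : Fin (C.n + 1) → Fm (CMSig C)) ⟨0, Nat.succ_pos _⟩) = x from rfl] at h
  simp only [Fin.cons_succ] at h
  rcases h with ⟨zn', h1, h2, h3⟩ | ⟨h1, _⟩
  · have : zn' = zn := by
      funext i
      have := (h1 i).symm.trans (hz i)
      exact CMVal.num.inj this
    rw [h3, this]
  · exact absurd ⟨zn, hz, hok⟩ h1

lemma exists_g {v : Fm (CMSig C) → CMVal C} (hv : IsVal (CMmatrix C) v) :
    ∃ g, Valid g ∧ ∀ a, v (enc C a) = .num (g a) := by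
  have key : ∀ a, ∃ r, v (enc C a) = .num r := by
    intro a
    induction a with
    | zero =>
      have h : v (.app .zero (fun i => i.elim0)) ∈ zeroC C := hv .zero (fun i => i.elim0)
      rcases h with h | h
      · exact ⟨.r0, h⟩
      · exact ⟨.ge0, h⟩
    | succ a ih =>
      obtain ⟨r, hr⟩ := ih
      have h : v (.app .succ (fun _ => enc C a)) ∈ succC C (v (enc C a)) :=
        hv .succ (fun _ => enc C a)
      rw [hr] at h
      obtain ⟨r', _, h2⟩ := h
      exact ⟨r', h2.symm⟩
  choose g hg using key
  refine ⟨g, ⟨?_, ?_⟩, hg⟩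
  · have h : v (.app .zero (fun i => i.elim0)) ∈ zeroC C := hv .zero (fun i => i.elim0)
    have h0 := hg 0
    rcases h with h | h
    · rw [show enc C 0 = .app .zero (fun i => i.elim0) from rfl, h] at h0
      rw [← CMVal.num.inj h0]
      exact Or.inl rfl
    · rw [show enc C 0 = .app .zero (fun i => i.elim0) from rfl, h] at h0
      rw [← CMVal.num.inj h0]
      exact Or.inr rfl
  · intro a
    have h : v (.app .succ (fun _ => enc C a)) ∈ succC C (v (enc C a)) :=
      hv .succ (fun _ => enc C a)
    rw [hg a] at h
    obtain ⟨r', hr', h2⟩ := h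
    have h3 : v (enc C (a + 1)) = .num r' := h2.symm
    rw [hg (a + 1)] at h3
    rw [CMVal.num.inj h3]
    exact hr'

lemma fwd {v : Fm (CMSig C) → CMVal C} (hv : IsVal (CMmatrix C) v) {g : ℕ → CMNum}
    (hval : Valid g) (hg : ∀ a, v (enc C a) = .num (g a)) :
    ∀ k cfg, steps C k = some cfg →
      v (seqFm C (compList C k)) = .conf cfg.1 (fun i => g (cfg.2 i)) := by
  intro k
  induction k with
  | zero =>
    intro cfg h
    have hc : cfg = (C.qinit, fun _ => 0) := (Option.some.inj h).symm
    subst hc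
    rw [compList_zero]
    erw [show seqFm C [(C.qinit, fun _ => 0)] =
      .app (.step C.qinit) (Fin.cons (.app .eps (fun i => i.elim0))
        (fun i => enc C 0)) from rfl]
    have := step_value hv C.qinit (.app .eps (fun i => i.elim0)) (fun _ => enc C 0)
      (fun _ => g 0) (fun i => hg 0) ?_
    · exact this
    · rw [eps_value hv]
      refine Or.inl ⟨rfl, rfl, ?_⟩
      rcases hval.1 with h | h
      · exact Or.inl (fun i => h)
      · exact Or.inr (fun i => h)
  | succ k ih =>
    intro cfg' h
    obtain ⟨cfg, h1, h2⟩ := steps_succ_elim h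
    have ihv := ih cfg h1
    rw [compList_succ h, seqFm_append]
    apply step_value hv cfg'.1 _ _ (fun i => g (cfg'.2 i)) (fun i => hg _)
    rw [ihv]
    refine Or.inr ⟨cfg.1, fun i => g (cfg.2 i), rfl, ?_⟩
    unfold nextConf at h2
    split at h2
    · exact absurd h2 (by simp)
    · rename_i i q₀ hδ
      obtain rfl : cfg' = (q₀, Function.update cfg.2 i (cfg.2 i + 1)) := (Option.some.inj h2).symm
      refine Or.inl ⟨i, hδ, ?_, ?_⟩
      · show g (Function.update cfg.2 i (cfg.2 i + 1) i) ∈ _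
        rw [Function.update_self]
        exact hval.2 _
      · intro l hl
        show g (Function.update cfg.2 i (cfg.2 i + 1) l) = _
        rw [Function.update_of_ne hl]
    · rename_i i q₁ q₂ hδ
      by_cases hz : cfg.2 i = 0
      · rw [if_pos hz] at h2
        obtain rfl : cfg' = (q₂, cfg.2) := (Option.some.inj h2).symm
        refine Or.inr (Or.inr ⟨i, q₁, hδ, ?_, rfl⟩)
        show g (cfg.2 i) ∈ zeroNum
        rw [hz]
        exact hval.1
      · rw [if_neg hz] at h2
        obtain rfl : cfg' = (q₁, Function.update cfg.2 i (cfg.2 i - 1)) := (Option.some.inj h2).symm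
        refine Or.inr (Or.inl ⟨i, q₂, hδ, ?_, ?_⟩)
        · show g (cfg.2 i) ∈ succNum (g (Function.update cfg.2 i (cfg.2 i - 1) i))
          rw [Function.update_self]
          have he : cfg.2 i = (cfg.2 i - 1) + 1 := by omega
          rw [he]
          exact hval.2 _
        · intro l hl
          show g (Function.update cfg.2 i (cfg.2 i - 1) l) = _
          rw [Function.update_of_ne hl]

end CMProof
namespace CMProof

lemma args_eq_cons {n : ℕ} {α : Type _} (args : Fin (n + 1) → α) (x : α) (zs : Fin n → α)
    (h0 : args ⟨0, Nat.succ_pos _⟩ = x) (hs : ∀ i : Fin n, args i.succ = zs i) :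
    args = Fin.cons x zs := by
  funext i
  rcases i with ⟨iv, hi⟩
  cases iv with
  | zero => exact h0
  | succ l =>
    have hl : l < n := Nat.lt_of_succ_lt_succ hi
    exact hs ⟨l, hl⟩

lemma back : ∀ (A : Fm (CMSig C)) (q : C.Q) (r : Fin C.n → CMNum),
    vF fE A = .conf q r → (∀ f, Valid f → vF f A ≠ .error) →
    ∃ j cfg, steps C j = some cfg ∧ cfg.1 = q ∧ A = seqFm C (compList C j) := by
  intro A
  induction A with
  | var i =>
    intro q r hA _
    rw [vF_var] at hA
    exact absurd hA (by simp)
  | app c args ih =>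
    intro q r hA hne
    cases c with
    | zero => rw [vF_zero] at hA; exact absurd hA (by simp)
    | eps => rw [vF_eps] at hA; exact absurd hA (by simp)
    | succ =>
      rw [vF_succ] at hA
      split at hA <;> exact absurd hA (by simp)
    | step qc =>
      rw [vF_step, stepVal] at hA
      split at hA
      case isFalse => exact absurd hA (by simp)
      case isTrue h =>
        obtain ⟨hq, hr⟩ := CMVal.conf.inj hA
        subst hq
        set B := args ⟨0, Nat.succ_pos _⟩ with hBdef
        obtain ⟨hz0, hok⟩ := h.choose_spec
        rw [hr] at hz0 hok
        -- extract the numeral depths of the numeric arguments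
        have hd : ∀ i : Fin C.n, ∃ a, numDepth (args i.succ) = some a ∧ r i = fE a :=
          fun i => vF_num_iff.mp (hz0 i)
        choose av hdepth hrav using hd
        have henc : ∀ i : Fin C.n, args i.succ = enc C (av i) :=
          fun i => enc_of_numDepth _ _ (hdepth i)
        -- the step condition holds for every valid assignment
        have hex : ∀ f, Valid f → ∃ zn', (∀ i, vF f (args i.succ) = .num (zn' i)) ∧
            stepOK C qc (vF f B) zn' := by
          intro f hf
          by_contra hc
          apply hne f hf
          rw [vF_step, stepVal, dif_neg hc]
        have hokf : ∀ f, Valid f → stepOK C qc (vF f B) (fun i => f (av i)) := by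
          intro f hf
          obtain ⟨zn', h1, h2⟩ := hex f hf
          have hzn' : zn' = fun i => f (av i) := by
            funext i
            exact CMVal.num.inj ((h1 i).symm.trans (vF_num_of_numDepth (hdepth i)))
          rwa [hzn'] at h2
        -- case on the value of the prefix under fE
        rcases hok with ⟨hB0, hq0, _⟩ | ⟨q', yn, hB0, _⟩
        · -- initial configuration
          have hBeps : B = .app .eps (fun i => i.elim0) := vF_init_iff.mp hB0
          have hinit : vF fE B = CMVal.init := hB0
          have hav : ∀ i, av i = 0 := by
            rcases hokf fE valid_fE with ⟨_, _, hzn⟩ | ⟨q'', yn', habs, _⟩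
            · rcases hzn with h | h
              · exact fun i => fE_r0 (h i)
              · exact fun i => absurd (h i) (fE_ne_ge0 _)
            · rw [hinit] at habs
              exact absurd habs (by simp)
          refine ⟨0, (C.qinit, fun _ => 0), rfl, hq0.symm, ?_⟩
          rw [compList_zero]
          erw [show seqFm C [(C.qinit, fun _ => 0)] =
            Fm.app (CMConn.step C.qinit) (Fin.cons (seqRev C []) (fun i => enc C 0)) from rfl]
          rw [← hq0]
          congr 1
          refine args_eq_cons args _ _ hBeps ?_
          intro i
          rw [henc i, hav i]
        · -- successor configuration: apply the induction hypothesis to the prefix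
          have hneB : ∀ f, Valid f → vF f B ≠ .error := by
            intro f hf hcon
            rcases hokf f hf with ⟨habs, _, _⟩ | ⟨q'', yn', habs, _⟩ <;>
              rw [hcon] at habs <;> exact absurd habs (by simp)
          obtain ⟨j, cfg, hsteps, hcfgq, hAB⟩ := ih ⟨0, Nat.succ_pos _⟩ q' yn hB0 hneB
          subst hcfgq
          -- the value of the prefix under any valid assignment
          have hvB : ∀ f, Valid f → vF f B = .conf cfg.1 (fun i => f (cfg.2 i)) := by
            intro f hf
            rw [hBdef, hAB]
            exact fwd (vF_isVal hf) hf (vF_enc f) j cfg hsteps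
          -- extract the transition conditions for every valid assignment
          have hstep : ∀ f, Valid f →
              (∃ i, C.δ cfg.1 = some (.inc i qc) ∧ f (av i) ∈ succNum (f (cfg.2 i)) ∧
                ∀ l, l ≠ i → f (av l) = f (cfg.2 l)) ∨
              (∃ i s, C.δ cfg.1 = some (.dec i qc s) ∧ f (cfg.2 i) ∈ succNum (f (av i)) ∧
                ∀ l, l ≠ i → f (av l) = f (cfg.2 l)) ∨
              (∃ i s, C.δ cfg.1 = some (.dec i s qc) ∧ f (cfg.2 i) ∈ zeroNum ∧
                ∀ l, f (av l) = f (cfg.2 l)) := by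
            intro f hf
            have h2 := hokf f hf
            rw [hvB f hf] at h2
            rcases h2 with ⟨habs, _, _⟩ | ⟨q'', yn'', heq, hc⟩
            · exact absurd habs (by simp)
            · obtain ⟨hq'', hyn''⟩ := CMVal.conf.inj heq
              subst hq''
              subst hyn''
              rcases hc with ⟨i, h1, h2, h3⟩ | ⟨i, s, h1, h2, h3⟩ | ⟨i, s, h1, h2, h3⟩
              · exact Or.inl ⟨i, h1, h2, h3⟩
              · exact Or.inr (Or.inl ⟨i, s, h1, h2, h3⟩)
              · exact Or.inr (Or.inr ⟨i, s, h1, h2, fun l => congrFun h3 l⟩)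
          -- now case on the actual instruction of the machine
          cases hδ : C.δ cfg.1 with
          | none =>
            exfalso
            rcases hstep fE valid_fE with ⟨i, h1, _⟩ | ⟨i, s, h1, _⟩ | ⟨i, s, h1, _⟩ <;>
              rw [hδ] at h1 <;> exact absurd h1 (by simp)
          | some instr =>
            cases instr with
            | inc i₀ qt =>
              -- collect the conditions, instruction is fixed
              have hcond : ∀ f, Valid f → (qt = qc ∧ f (av i₀) ∈ succNum (f (cfg.2 i₀)) ∧
                  ∀ l, l ≠ i₀ → f (av l) = f (cfg.2 l)) := by
                intro f hf
                rcases hstep f hf with ⟨i, h1, h2, h3⟩ | ⟨i, s, h1, _⟩ | ⟨i, s, h1, _⟩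
                · rw [hδ] at h1
                  obtain ⟨hi, hqq⟩ := CMInstr.inc.inj (Option.some.inj h1)
                  subst hi
                  exact ⟨hqq, h2, h3⟩
                · rw [hδ] at h1; exact absurd (Option.some.inj h1) (by simp)
                · rw [hδ] at h1; exact absurd (Option.some.inj h1) (by simp)
              have hqt : qt = qc := (hcond fE valid_fE).1
              have havi : av i₀ = cfg.2 i₀ + 1 :=
                claim_inc (fun f hf => (hcond f hf).2.1)
              have havl : ∀ l, l ≠ i₀ → av l = cfg.2 l :=
                fun l hl => claim_eq (fun f hf => (hcond f hf).2.2 l hl)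
              have hav : av = Function.update cfg.2 i₀ (cfg.2 i₀ + 1) := by
                funext l
                by_cases hl : l = i₀
                · subst hl; rw [Function.update_self]; exact havi
                · rw [Function.update_of_ne hl]; exact havl l hl
              have hsteps' : steps C (j + 1) =
                  some (qc, Function.update cfg.2 i₀ (cfg.2 i₀ + 1)) := by
                show (steps C j).bind (nextConf C) = _
                rw [hsteps]
                show nextConf C cfg = _
                unfold nextConf
                rw [hδ]
                show some (qt, Function.update cfg.2 i₀ (cfg.2 i₀ + 1)) = _
                rw [hqt]
              refine ⟨j + 1, (qc, Function.update cfg.2 i₀ (cfg.2 i₀ + 1)), hsteps', rfl, ?_⟩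
              erw [compList_succ hsteps', seqFm_append]
              congr 1
              refine args_eq_cons args _ _ hAB ?_
              intro i
              rw [henc i, hav]
            | dec i₀ qt₁ qt₂ =>
              have hcond : ∀ f, Valid f →
                  ((qt₁ = qc ∧ f (cfg.2 i₀) ∈ succNum (f (av i₀)) ∧
                    ∀ l, l ≠ i₀ → f (av l) = f (cfg.2 l)) ∨
                   (qt₂ = qc ∧ f (cfg.2 i₀) ∈ zeroNum ∧ ∀ l, f (av l) = f (cfg.2 l))) := by
                intro f hf
                rcases hstep f hf with ⟨i, h1, _⟩ | ⟨i, s, h1, h2, h3⟩ | ⟨i, s, h1, h2, h3⟩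
                · rw [hδ] at h1; exact absurd (Option.some.inj h1) (by simp)
                · rw [hδ] at h1
                  obtain ⟨hi, hqq, hss⟩ := CMInstr.dec.inj (Option.some.inj h1)
                  subst hi
                  exact Or.inl ⟨hqq, h2, h3⟩
                · rw [hδ] at h1
                  obtain ⟨hi, hss, hqq⟩ := CMInstr.dec.inj (Option.some.inj h1)
                  subst hi
                  exact Or.inr ⟨hqq, h2, h3⟩
              have havl : ∀ l, l ≠ i₀ → av l = cfg.2 l := by
                intro l hl
                refine claim_eq (fun f hf => ?_)
                rcases hcond f hf with ⟨_, _, h3⟩ | ⟨_, _, h3⟩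
                · exact h3 l hl
                · exact h3 l
              by_cases hz : cfg.2 i₀ = 0
              · -- zero branch
                have hE := hcond fE valid_fE
                rcases hE with ⟨_, h2, _⟩ | ⟨hq2, _, h3⟩
                · exfalso
                  rw [hz] at h2
                  exact absurd h2 (by
                    have h0 : fE 0 = CMNum.r0 := by simp [fE]
                    rw [h0]
                    exact r0_not_succNum _)
                · have havi : av i₀ = 0 := by
                    have h4 := h3 i₀
                    rw [hz] at h4
                    refine fE_r0 ?_
                    rw [h4]
                    simp [fE]
                  have hav : av = cfg.2 := by
                    funext l
                    by_cases hl : l = i₀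
                    · subst hl; rw [havi, hz]
                    · exact havl l hl
                  have hsteps' : steps C (j + 1) = some (qc, cfg.2) := by
                    show (steps C j).bind (nextConf C) = _
                    rw [hsteps]
                    show nextConf C cfg = _
                    unfold nextConf
                    rw [hδ]
                    show (if cfg.2 i₀ = 0 then some (qt₂, cfg.2)
                      else some (qt₁, Function.update cfg.2 i₀ (cfg.2 i₀ - 1))) = _
                    rw [if_pos hz, hq2]
                  refine ⟨j + 1, (qc, cfg.2), hsteps', rfl, ?_⟩
                  erw [compList_succ hsteps', seqFm_append]
                  congr 1
                  refine args_eq_cons args _ _ hAB ?_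
                  intro i
                  rw [henc i, hav]
              · -- nonzero branch
                have hq1 : qt₁ = qc := by
                  rcases hcond fE valid_fE with ⟨hq1, _, _⟩ | ⟨_, h2, _⟩
                  · exact hq1
                  · exact absurd (fE_zeroNum h2) hz
                have hdec : cfg.2 i₀ = av i₀ + 1 := by
                  refine claim_dec1 (by omega) (fun f hf => ?_)
                  rcases hcond f hf with ⟨_, h2, _⟩ | ⟨_, h2, h3⟩
                  · exact Or.inl h2
                  · exact Or.inr ⟨h2, h3 i₀⟩
                have hav : av = Function.update cfg.2 i₀ (cfg.2 i₀ - 1) := by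
                  funext l
                  by_cases hl : l = i₀
                  · subst hl; rw [Function.update_self]; omega
                  · rw [Function.update_of_ne hl]; exact havl l hl
                have hsteps' : steps C (j + 1) =
                    some (qc, Function.update cfg.2 i₀ (cfg.2 i₀ - 1)) := by
                  show (steps C j).bind (nextConf C) = _
                  rw [hsteps]
                  show nextConf C cfg = _
                  unfold nextConf
                  rw [hδ]
                  show (if cfg.2 i₀ = 0 then some (qt₂, cfg.2)
                    else some (qt₁, Function.update cfg.2 i₀ (cfg.2 i₀ - 1))) = _
                  rw [if_neg hz, hq1]
                refine ⟨j + 1, (qc, Function.update cfg.2 i₀ (cfg.2 i₀ - 1)), hsteps', rfl, ?_⟩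
                erw [compList_succ hsteps', seqFm_append]
                congr 1
                refine args_eq_cons args _ _ hAB ?_
                intro i
                rw [henc i, hav]

end CMProof

/-- For every formula A over Σ_C: the computation comp(C,0⃗) is finite
(i.e. some step k reaches a halting configuration) and A = seq(comp(C,0⃗)), if and only if
A is a theorem of the logic of ℂ. -/
theorem stmt_7 (C : CounterMachine) (A : Fm (CMSig C)) :
    (∃ (k : ℕ) (cfg : Config C), steps C k = some cfg ∧ Halting C cfg ∧
        A = seqFm C (compList C k)) ↔
      Entails (CMmatrix C) ∅ A := by
  constructor
  · rintro ⟨k, cfg, hsteps, hH, hA⟩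
    intro v hv _
    obtain ⟨g, hval, hg⟩ := CMProof.exists_g hv
    rw [hA, CMProof.fwd hv hval hg k cfg hsteps]
    exact ⟨cfg.1, fun i => g (cfg.2 i), rfl, hH⟩
  · intro hEnt
    have h1 := hEnt (CMProof.vF CMProof.fE) (CMProof.vF_isVal CMProof.valid_fE)
      (fun B hB => absurd hB (Set.notMem_empty B))
    obtain ⟨qh, rh, hconf, hhalt⟩ := h1
    have hne : ∀ f, CMProof.Valid f → CMProof.vF f A ≠ .error := by
      intro f hf hcon
      have h2 := hEnt (CMProof.vF f) (CMProof.vF_isVal hf)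
        (fun B hB => absurd hB (Set.notMem_empty B))
      rw [hcon] at h2
      obtain ⟨q', r', habs, _⟩ := h2
      exact absurd habs (by simp)
    obtain ⟨j, cfg, hsteps, hq, hA⟩ := CMProof.back A qh rh hconf hne
    refine ⟨j, cfg, hsteps, ?_, hA⟩
    show C.δ cfg.1 = none
    rw [hq]
    exact hhalt
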